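/- (Theorem 1, admissibility of the halting condition, stated for best-first search over a path space as in Hart–Nilsson–Raphael.) Let V be a type with edge-cost function c : V → V → ℝ≥0∞, let s, t ∈ V, let h : V → ℝ≥0∞ be admissible for t (h(n) ≤ d(n,t) for every n), and let F ⊆ V separate s from t. If P is a walk from s to t whose cost C satisfies C ≤ d(s,n) + h(n) for every n ∈ F (i.e. the cost of the found route is no larger than the minimal frontier value g + h), then C = d(s,t), i.e. the returned route P is an optimal solution. -/

import Mathlib

open scoped ENNReal

/-- A walk from `u` to `v`: a finite nonempty list of vertices starting at `u`
and ending at `v`. -/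
def IsWalk {V : Type} (u v : V) (l : List V) : Prop :=
  l.head? = some u ∧ l.getLast? = some v

/-- Cost of a walk: the sum of the edge costs over consecutive pairs. -/
noncomputable def walkCost {V : Type} (c : V → V → ℝ≥0∞) (l : List V) : ℝ≥0∞ :=
  ((l.zip l.tail).map fun p => c p.1 p.2).sum

/-- `graphDist c u v`: the infimum of the costs of all walks from `u` to `v`. -/
noncomputable def graphDist {V : Type} (c : V → V → ℝ≥0∞) (u v : V) : ℝ≥0∞ :=
  ⨅ (l : List V) (_ : IsWalk u v l), walkCost c l

/-- `F` separates `s` from `t` if every walk from `s` to `t` contains a vertex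
of `F`. -/
def Separates {V : Type} (s t : V) (F : Set V) : Prop :=
  ∀ l : List V, IsWalk s t l → ∃ x ∈ F, x ∈ l

/-- A heuristic `h` is admissible for `t` if `h n ≤ d(n, t)` for every `n`. -/
def Admissible {V : Type} (c : V → V → ℝ≥0∞) (t : V) (h : V → ℝ≥0∞) : Prop :=
  ∀ n : V, h n ≤ graphDist c n t

lemma walkCost_cons_cons {V : Type} (c : V → V → ℝ≥0∞) (a b : V) (l : List V) :
    walkCost c (a :: b :: l) = c a b + walkCost c (b :: l) := by
  simp [walkCost]

lemma walkCost_split {V : Type} (c : V → V → ℝ≥0∞) (a : List V) (x : V) (b : List V) :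
    walkCost c (a ++ x :: b) = walkCost c (a ++ [x]) + walkCost c (x :: b) := by
  induction a with
  | nil => simp [walkCost]
  | cons y a ih =>
    cases a with
    | nil => simp [walkCost_cons_cons, walkCost, add_assoc]
    | cons z a' =>
      simp only [List.cons_append, walkCost_cons_cons]
      simp only [List.cons_append] at ih
      rw [ih]; ring

/-- Theorem 1, admissibility of the halting condition: if `h` is
admissible for `t`, `F` separates `s` from `t`, and `P` is a walk from `s` to
`t` whose cost is no larger than `d(s,n) + h(n)` for every frontier vertex
`n ∈ F`, then the cost of `P` equals `d(s,t)`, i.e. `P` is an optimal route. -/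
theorem halting_condition_optimal {V : Type} (c : V → V → ℝ≥0∞) (s t : V)
    (h : V → ℝ≥0∞) (hadm : Admissible c t h) (F : Set V)
    (hsep : Separates s t F) (P : List V) (hP : IsWalk s t P)
    (hhalt : ∀ n ∈ F, walkCost c P ≤ graphDist c s n + h n) :
    walkCost c P = graphDist c s t := by
  refine le_antisymm ?_ ?_
  · -- walkCost P ≤ d(s,t): every walk from s to t costs at least walkCost P
    refine le_iInf fun l => le_iInf fun hl => ?_
    obtain ⟨x, hxF, hxl⟩ := hsep l hl
    obtain ⟨a, b, rfl⟩ := List.append_of_mem hxl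
    have hsplit := walkCost_split c a x b
    have hwp : IsWalk s x (a ++ [x]) := by
      constructor
      · have := hl.1
        cases a with
        | nil => simpa using this
        | cons y a' => simpa using this
      · simp
    have hwq : IsWalk x t (x :: b) := by
      refine ⟨rfl, ?_⟩
      have := hl.2
      rwa [List.getLast?_append_of_ne_nil _ (by simp)] at this
    have h1 : graphDist c s x ≤ walkCost c (a ++ [x]) := by
      exact iInf₂_le _ hwp
    have h2 : graphDist c x t ≤ walkCost c (x :: b) := by
      exact iInf₂_le _ hwq
    calc walkCost c P ≤ graphDist c s x + h x := hhalt x hxF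
      _ ≤ walkCost c (a ++ [x]) + graphDist c x t := add_le_add h1 (hadm x)
      _ ≤ walkCost c (a ++ [x]) + walkCost c (x :: b) := add_le_add le_rfl h2
      _ = walkCost c (a ++ x :: b) := hsplit.symm
  · exact iInf₂_le _ hP
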